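/- For every n ≥ 1, if w is a Kreweras word of length 3n then Pro(w) is also a Kreweras word of length 3n, and Pro is a bijection on the set of Kreweras words of length 3n. -/

import Mathlib

open scoped Classical

/-- The three letters `A`, `B`, `C`. -/
inductive V : Type
  | A | B | C
deriving DecidableEq

instance : Fintype V :=
  ⟨⟨{V.A, V.B, V.C}, by decide⟩, fun x => by cases x <;> decide⟩

/-- A Kreweras word of length `3n`: a word in `{A,B,C}` with equally many `A`'s, `B`'s
and `C`'s, every prefix of which has at least as many `A`'s as `B`'s and at least as
many `A`'s as `C`'s. -/
def IsKrewerasWord (n : ℕ) (w : List V) : Prop :=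
  w.length = 3 * n ∧ w.count V.A = n ∧ w.count V.B = n ∧ w.count V.C = n ∧
  ∀ i, (w.take i).count V.B ≤ (w.take i).count V.A ∧
    (w.take i).count V.C ≤ (w.take i).count V.A

/-- `ι(w)`: the smallest index `ι ≥ 1` such that the prefix `(w_1, …, w_ι)` has equally
many `A`'s as `B`'s or equally many `A`'s as `C`'s. -/
noncomputable def kiota (w : List V) : ℕ :=
  sInf {i : ℕ | 1 ≤ i ∧ ((w.take i).count V.A = (w.take i).count V.B ∨
    (w.take i).count V.A = (w.take i).count V.C)}

/-- Promotion of a Kreweras word: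
`Pro(w) = (w_2, …, w_{ι(w)−1}, A, w_{ι(w)+1}, …, w_{3n}, w_{ι(w)})`. -/
noncomputable def KPro (w : List V) : List V :=
  ((w.drop 1).take (kiota w - 2)) ++ [V.A] ++ w.drop (kiota w) ++
    [w.getD (kiota w - 1) V.A]

lemma kdecomp {n : ℕ} {w : List V} (hn : 1 ≤ n) (h : IsKrewerasWord n w) :
    ∃ u t c, w = V.A :: (u ++ [c] ++ t) ∧
      KPro w = u ++ [V.A] ++ t ++ [c] ∧
      (∀ j, (u.take j).count V.B ≤ (u.take j).count V.A ∧
            (u.take j).count V.C ≤ (u.take j).count V.A) ∧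
      ((c = V.B ∧ u.count V.A = u.count V.B ∧
          (∀ m, (t.take m).count V.B ≤ (t.take m).count V.A) ∧
          (∀ m, u.count V.C + (t.take m).count V.C ≤
            1 + u.count V.A + (t.take m).count V.A)) ∨
       (c = V.C ∧ u.count V.A = u.count V.C ∧
          (∀ m, (t.take m).count V.C ≤ (t.take m).count V.A) ∧
          (∀ m, u.count V.B + (t.take m).count V.B ≤
            1 + u.count V.A + (t.take m).count V.A))) := by
  obtain ⟨hlen, hA, hB, hC, hpre⟩ := h
  -- w is nonempty, and its first letter is A
  rcases w with _ | ⟨a, tl⟩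
  · exfalso; simp at hlen; omega
  have ha : a = V.A := by
    have h1 := hpre 1
    cases a
    · rfl
    · simp [List.count_cons] at h1
    · simp [List.count_cons] at h1
  subst ha
  -- basic facts about kiota
  set S : Set ℕ := {i : ℕ | 1 ≤ i ∧ (((V.A :: tl).take i).count V.A = ((V.A :: tl).take i).count V.B ∨
      ((V.A :: tl).take i).count V.A = ((V.A :: tl).take i).count V.C)} with hSdef
  have hkS : kiota (V.A :: tl) = sInf S := rfl
  have h3 : (3*n) ∈ S := by
    constructor
    · omega
    · rw [List.take_of_length_le (by omega)]
      left; rw [hA, hB]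
  have hmem : kiota (V.A :: tl) ∈ S := by rw [hkS]; exact Nat.sInf_mem ⟨_, h3⟩
  have hle : kiota (V.A :: tl) ≤ 3*n := by rw [hkS]; exact Nat.sInf_le h3
  have hmin : ∀ j, 1 ≤ j → j < kiota (V.A :: tl) →
      ((V.A :: tl).take j).count V.A ≠ ((V.A :: tl).take j).count V.B ∧
      ((V.A :: tl).take j).count V.A ≠ ((V.A :: tl).take j).count V.C := by
    intro j h1 h2
    rw [hkS] at h2
    have hns := Nat.notMem_of_lt_sInf h2
    rw [hSdef] at hns
    simp only [Set.mem_setOf_eq, not_and, not_or] at hns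
    exact hns h1
  have hι1 : 1 ≤ kiota (V.A :: tl) := hmem.1
  have hι2 : 2 ≤ kiota (V.A :: tl) := by
    by_contra hlt
    have heq1 : kiota (V.A :: tl) = 1 := by omega
    have h2 := hmem.2
    rw [heq1] at h2
    simp [List.count_cons] at h2
  set k := kiota (V.A :: tl) - 2 with hkdef
  have hk2 : kiota (V.A :: tl) = k + 2 := by omega
  have htl : tl.length + 1 = 3 * n := by simpa using hlen
  have hklt : k < tl.length := by omega
  obtain ⟨u, hudef⟩ : ∃ u, List.take k tl = u := ⟨_, rfl⟩
  obtain ⟨c, hcdef⟩ : ∃ c, tl.getD k V.A = c := ⟨_, rfl⟩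
  obtain ⟨t, htdef⟩ : ∃ t, List.drop (k+1) tl = t := ⟨_, rfl⟩
  have htk1 : tl.take (k+1) = u ++ [c] := by
    rw [List.take_succ, List.getElem?_eq_getElem hklt, ← hudef, ← hcdef,
      List.getD_eq_getElem _ _ hklt]
    rfl
  have hdtl : tl = u ++ [c] ++ t := by
    conv_lhs => rw [← List.take_append_drop (k+1) tl]
    rw [htk1, htdef]
  -- strictness below kiota
  have hstrict : ∀ j, j ≤ k → (tl.take j).count V.B ≤ (tl.take j).count V.A ∧
      (tl.take j).count V.C ≤ (tl.take j).count V.A := by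
    intro j hj
    have h1 := hmin (j+1) (by omega) (by omega)
    have h2 := hpre (j+1)
    rw [List.take_succ_cons] at h1 h2
    simp [List.count_cons] at h1 h2
    omega
  have huBC : u.count V.B ≤ u.count V.A ∧ u.count V.C ≤ u.count V.A := by
    have := hstrict k le_rfl
    rwa [hudef] at this
  -- the equality case at kiota
  have hcase : (c = V.B ∧ u.count V.A = u.count V.B) ∨
      (c = V.C ∧ u.count V.A = u.count V.C) := by
    have h2 := hmem.2
    rw [hk2, show k+2 = (k+1)+1 from rfl, List.take_succ_cons, htk1] at h2
    cases c
    · exfalso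
      simp [List.count_cons, List.count_append] at h2
      omega
    · left
      refine ⟨rfl, ?_⟩
      simp [List.count_cons, List.count_append] at h2
      omega
    · right
      refine ⟨rfl, ?_⟩
      simp [List.count_cons, List.count_append] at h2
      omega
  -- middle prefix inequalities
  have hmid : ∀ m, ((u ++ [c] ++ t.take m).count V.B) ≤
        1 + ((u ++ [c] ++ t.take m).count V.A) ∧
      ((u ++ [c] ++ t.take m).count V.C) ≤
        1 + ((u ++ [c] ++ t.take m).count V.A) := by
    intro m
    have h2 := hpre (k+2+m)
    rw [show k+2+m = ((k+1)+m)+1 from by omega, List.take_succ_cons,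
      List.take_add, htk1, htdef] at h2
    simp [List.count_cons, List.count_append] at h2 ⊢
    omega
  refine ⟨u, t, c, ?_, ?_, ?_, ?_⟩
  · rw [hdtl]
  · rw [KPro, hk2]
    rw [show k+2-2 = k from rfl, show k+2-1 = k+1 from rfl,
      List.drop_one, List.tail_cons, hudef,
      show (k:ℕ)+2 = (k+1)+1 from rfl, List.drop_succ_cons, htdef,
      List.getD_cons_succ, hcdef]
  · intro j
    rw [← hudef, List.take_take]
    exact hstrict _ (min_le_right _ _)
  · rcases hcase with ⟨hc, he⟩ | ⟨hc, he⟩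
    · subst hc
      left
      refine ⟨rfl, he, ?_, ?_⟩
      · intro m
        have := (hmid m).1
        simp [List.count_append] at this
        omega
      · intro m
        have := (hmid m).2
        simp [List.count_append] at this
        omega
    · subst hc
      right
      refine ⟨rfl, he, ?_, ?_⟩
      · intro m
        have := (hmid m).2
        simp [List.count_append] at this
        omega
      · intro m
        have := (hmid m).1
        simp [List.count_append] at this
        omega

lemma kpro_mem {n : ℕ} {w : List V} (hn : 1 ≤ n) (h : IsKrewerasWord n w) :
    IsKrewerasWord n (KPro w) := by
  obtain ⟨u, t, c, hw, hkp, hS, hcase⟩ := kdecomp hn h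
  obtain ⟨hlen, hA, hB, hC, hpre⟩ := h
  rw [hw] at hlen hA hB hC
  simp [List.count_cons, List.count_append] at hA hB hC
  simp at hlen
  rw [hkp]
  rcases hcase with ⟨hc, he, hii, hiii⟩ | ⟨hc, he, hii, hiii⟩ <;> subst hc <;>
    simp only [List.count_singleton, beq_iff_eq, reduceIte, reduceCtorEq,
      if_false, if_true] at hA hB hC <;>
    refine ⟨by simp [List.length_append]; omega,
      by simp [List.count_append]; omega,
      by simp [List.count_append]; omega,
      by simp [List.count_append]; omega, ?_⟩
  · -- prefix condition, c = V.B
    intro i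
    rcases le_or_gt i u.length with h1 | h1
    · have hti : (u ++ [V.A] ++ t ++ [V.B]).take i = u.take i := by
        rw [List.take_append_of_le_length (by simp; omega),
          List.take_append_of_le_length (by simp; omega),
          List.take_append_of_le_length h1]
      rw [hti]
      exact hS i
    · rcases le_or_gt i (u.length + 1 + t.length) with h2 | h2
      · obtain ⟨m, hmdef⟩ : ∃ m, m = i - (u.length + 1) := ⟨_, rfl⟩
        have hi : i = (u ++ [V.A]).length + m := by simp; omega
        have hti : (u ++ [V.A] ++ t ++ [V.B]).take i =
            u ++ [V.A] ++ t.take m := by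
          rw [List.append_assoc (u ++ [V.A]) t [V.B], hi, List.take_length_add_append,
            List.take_append_of_le_length (by omega)]
        rw [hti]
        have h3 := hii m
        have h4 := hiii m
        simp [List.count_append]
        omega
      · rw [List.take_of_length_le (by simp; omega)]
        simp [List.count_append]
        omega
  · -- prefix condition, c = V.C
    intro i
    rcases le_or_gt i u.length with h1 | h1
    · have hti : (u ++ [V.A] ++ t ++ [V.C]).take i = u.take i := by
        rw [List.take_append_of_le_length (by simp; omega),
          List.take_append_of_le_length (by simp; omega),
          List.take_append_of_le_length h1]
      rw [hti]
      exact hS i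
    · rcases le_or_gt i (u.length + 1 + t.length) with h2 | h2
      · obtain ⟨m, hmdef⟩ : ∃ m, m = i - (u.length + 1) := ⟨_, rfl⟩
        have hi : i = (u ++ [V.A]).length + m := by simp; omega
        have hti : (u ++ [V.A] ++ t ++ [V.C]).take i =
            u ++ [V.A] ++ t.take m := by
          rw [List.append_assoc (u ++ [V.A]) t [V.C], hi, List.take_length_add_append,
            List.take_append_of_le_length (by omega)]
        rw [hti]
        have h3 := hii m
        have h4 := hiii m
        simp [List.count_append]
        omega
      · rw [List.take_of_length_le (by simp; omega)]
        simp [List.count_append]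
        omega

lemma no_split (x : V) (u t u' t' : List V)
    (h : u ++ [V.A] ++ t = u' ++ [V.A] ++ t')
    (hlt : u.length < u'.length)
    (hiu : u.count V.A = u.count x)
    (hiu' : u'.count V.A = u'.count x)
    (hii : ∀ m, (t.take m).count x ≤ (t.take m).count V.A)
    (h0 : ([V.A] : List V).count x = 0) : False := by
  have hlen : u.length + 1 + t.length = u'.length + 1 + t'.length := by
    have := congrArg List.length h
    simp at this
    omega
  obtain ⟨m, hmdef⟩ : ∃ m, m = u'.length - (u.length + 1) := ⟨_, rfl⟩
  have hm : u'.length = (u ++ [V.A]).length + m := by simp; omega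
  have hts := congrArg (List.take u'.length) h
  rw [List.take_append_of_le_length (l₁ := u' ++ [V.A]) (l₂ := t') (by simp),
    List.take_append_of_le_length (l₁ := u') (l₂ := [V.A]) le_rfl,
    List.take_length, hm, List.take_length_add_append] at hts
  have hA' := congrArg (List.count V.A) hts
  have hx' := congrArg (List.count x) hts
  simp only [List.count_append, List.count_singleton, h0] at hA' hx'
  simp at hA'
  have := hii m
  omega

lemma kpro_injOn {n : ℕ} (hn : 1 ≤ n) :
    Set.InjOn KPro {w | IsKrewerasWord n w} := by
  intro w hw w' hw' heq
  obtain ⟨u, t, c, hwd, hkp, hS, hcase⟩ := kdecomp hn hw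
  obtain ⟨u', t', c', hwd', hkp', hS', hcase'⟩ := kdecomp hn hw'
  rw [hkp, hkp'] at heq
  obtain ⟨heq2, heqc⟩ := List.append_inj' heq rfl
  have hc : c = c' := by simpa using heqc
  subst hc
  rcases lt_trichotomy u.length u'.length with hl | hl | hl
  · exfalso
    rcases hcase with ⟨hc1, he, hii, _⟩ | ⟨hc1, he, hii, _⟩ <;>
      rcases hcase' with ⟨hc1', he', _, _⟩ | ⟨hc1', he', _, _⟩
    · exact no_split V.B u t u' t' heq2 hl (hc1 ▸ he) (hc1' ▸ he') (hc1 ▸ hii) rfl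
    · rw [hc1] at hc1'; cases hc1'
    · rw [hc1] at hc1'; cases hc1'
    · exact no_split V.C u t u' t' heq2 hl (hc1 ▸ he) (hc1' ▸ he') (hc1 ▸ hii) rfl
  · have hl1 : (u ++ [V.A]).length = (u' ++ [V.A]).length := by simp [hl]
    obtain ⟨huA, htt⟩ := List.append_inj heq2 hl1
    obtain ⟨huu, -⟩ := List.append_inj' huA rfl
    rw [hwd, hwd', huu, htt]
  · exfalso
    rcases hcase with ⟨hc1, he, _, _⟩ | ⟨hc1, he, _, _⟩ <;>
      rcases hcase' with ⟨hc1', he', hii', _⟩ | ⟨hc1', he', hii', _⟩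
    · exact no_split V.B u' t' u t heq2.symm hl (hc1' ▸ he') (hc1 ▸ he) (hc1' ▸ hii') rfl
    · rw [hc1] at hc1'; cases hc1'
    · rw [hc1] at hc1'; cases hc1'
    · exact no_split V.C u' t' u t heq2.symm hl (hc1' ▸ he') (hc1 ▸ he) (hc1' ▸ hii') rfl

/-- For every `n ≥ 1`, promotion sends Kreweras words of length `3n` to Kreweras words
of length `3n`, and is a bijection on the set of Kreweras words of length `3n`. -/
theorem stmt15 (n : ℕ) (hn : 1 ≤ n) :
    (∀ w, IsKrewerasWord n w → IsKrewerasWord n (KPro w)) ∧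
      Set.BijOn KPro {w | IsKrewerasWord n w} {w | IsKrewerasWord n w} := by
  have hmaps : ∀ w, IsKrewerasWord n w → IsKrewerasWord n (KPro w) :=
    fun _ h => kpro_mem hn h
  refine ⟨hmaps, ?_⟩
  have hfin : {w : List V | IsKrewerasWord n w}.Finite :=
    (List.finite_length_eq V (3 * n)).subset fun w hw => hw.1
  exact (hfin.injOn_iff_bijOn_of_mapsTo fun w hw => hmaps w hw).mp (kpro_injOn hn)
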